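/- The set of common zeros of F and Q in ℙ²(ℂ) is exactly {p2, p3, p4, p5}: each of p2, p3, p4, p5 satisfies F = Q = 0, and conversely every (x₀,y₀,z₀) ∈ ℂ³ \ {(0,0,0)} with F(x₀,y₀,z₀) = Q(x₀,y₀,z₀) = 0 represents one of the projective points p2, p3, p4, p5. (Thus the octic curve {F = 0} meets the conic {Q = 0} only at p2, p3, p4, p5.) -/
import Mathlib


noncomputable section

open MvPolynomial

/-- The polynomial ring `ℂ[x,y,z]`. -/
abbrev R3 : Type := MvPolynomial (Fin 3) ℂ

/-- `α = √17`. -/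
def α : ℂ := Real.sqrt 17
/-- `β = √(21 + 5√17)`. -/
def β : ℂ := Real.sqrt (21 + 5 * Real.sqrt 17)
/-- `δ = √(5 + √17)`. -/
def δ : ℂ := Real.sqrt (5 + Real.sqrt 17)

def x : R3 := X 0
def y : R3 := X 1
def z : R3 := X 2

def A1 : R3 :=
  14408408592*x^4*y^2*z + 50076004923*x^4*z^3 + 14182182144*x^3*y^4
  + 219953469600*x^3*y^2*z^2 - 363210576777*x^3*z^4 - 1093337332608*x^2*y^2*z^3
  + 831133690121*x^2*z^5 + 858975454416*x*y^2*z^4 - 772939669603*x*z^6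
  + 254940551336*z^7

def A2 : R3 :=
  -72389196288*x^4*y^4 - 3335393797632*x^4*y^2*z^2 - 1065820046526*x^4*z^4
  - 8342111361024*x^3*y^4*z + 3945428471808*x^3*y^2*z^3 + 10184161263912*x^3*z^5
  + 20168534212608*x^2*y^4*z^2 + 53110876008192*x^2*y^2*z^4 - 32270723397636*x^2*z^6
  - 100932292129536*x*y^2*z^5 + 38252243189640*x*z^7 + 47211381447168*y^2*z^6
  - 15099861009390*z^8

def A3 : R3 :=
  15490159728*x^4*y^2*z + 53840161671*x^4*z^3 + 15251365120*x^3*y^4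
  + 236488232416*x^3*y^2*z^2 - 390512591333*x^3*z^4 - 1175521621376*x^2*y^2*z^3
  + 893608694925*x^2*z^5 + 923543229232*x*y^2*z^4 - 831040262535*x*z^6
  + 274103997272*z^7

def A4 : R3 :=
  59398585488*x^4*y^2*z + 206468708787*x^4*z^3 + 58496365824*x^3*y^4
  + 906899335584*x^3*y^2*z^2 - 1497555836337*x^3*z^4 - 4507944789888*x^2*y^2*z^3
  + 3426852351793*x^2*z^5 + 3541646868816*x*y^2*z^4 - 3186912029723*x*z^6
  + 1051146805480*z^7

def A5 : R3 :=
  -466877917440*x^4*y^4 - 21516582641184*x^4*y^2*z^2 - 6875617032333*x^4*z^4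
  - 53815549731840*x^3*y^4*z + 25451977456512*x^3*y^2*z^3 + 65698123816692*x^3*z^5
  + 130107481479168*x^2*y^4*z^2 + 342618718898784*x^2*y^2*z^4 - 208178748305934*x^2*z^6
  - 651115201689280*x*y^2*z^5 + 246765593291124*x*z^7 + 304561087975168*y^2*z^6
  - 97409351769549*z^8

def A6 : R3 :=
  -298344909312*x^4*y^4 - 13752106145280*x^4*y^2*z^2 - 4394491299054*x^4*z^4
  - 34395989170176*x^3*y^4*z + 16267404201984*x^3*y^2*z^3 + 41990375439720*x^3*z^5
  + 83157067186176*x^2*y^4*z^2 + 218981688444672*x^2*y^2*z^4 - 133055599121316*x^2*z^6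
  - 416154499902208*x*y^2*z^5 + 157718037119688*x*z^7 + 194657513400832*y^2*z^6
  - 62258322139038*z^8

def A7 : R3 :=
  191605550544*x^4*y^2*z + 665965983645*x^4*z^3 + 188641373952*x^3*y^4
  + 2925195141792*x^3*y^2*z^2 - 4830373865031*x^3*z^4 - 14540399432832*x^2*y^2*z^3
  + 11053328983807*x^2*z^5 + 11423598740496*x*y^2*z^4 - 10279400307101*x*z^6
  + 3390479204680*z^7

def A8 : R3 :=
  -1925078503680*x^4*y^4 - 88715185482528*x^4*y^2*z^2 - 28348893570645*x^4*z^4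
  - 221886790124544*x^3*y^4*z + 104941198124928*x^3*y^2*z^3 + 270880301999124*x^3*z^5
  + 536446841591808*x^2*y^4*z^2 + 1412653204386144*x^2*y^2*z^4 - 858342969385662*x^2*z^6
  - 2684616751584448*x*y^2*z^5 + 1017440607056532*x*z^7 + 1255737534555904*y^2*z^6
  - 401629046099349*z^8

/-- Werner's homogeneous octic `F`. -/
def F : R3 :=
  C (24*α*β*δ) * y * A1 + C (α*β) * A2 + C (144*α*δ) * y * A3
  + C (24*β*δ) * y * A4 + C α * A5 + C β * A6 + C (48*δ) * y * A7 + A8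

/-- The conic `Q`. -/
def Qpoly : R3 :=
  C (9*α*β+90*α+81*β+234) * x^2 + C (176*α*β+1568*α+1200*β+5920) * y^2
  + C (57*α*β+258*α+129*β+1170) * z^2 - C (48*α*β*δ+168*α*δ+48*β*δ+936*δ) * x * y
  - C (66*α*β+348*α+210*β+1404) * x * z + C (48*α*β*δ+168*α*δ+48*β*δ+936*δ) * y * z

/-- Coordinate representative of `p = [1:0:0]`. -/
def ptP : Fin 3 → ℂ := ![1, 0, 0]
/-- Coordinate representative of `p1 = [0:1:0]`. -/
def ptP1 : Fin 3 → ℂ := ![0, 1, 0]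
/-- Coordinate representative of `p2 = [10+4α+4β : 3δ : 6]`. -/
def ptP2 : Fin 3 → ℂ := ![10+4*α+4*β, 3*δ, 6]
/-- Coordinate representative of `p3 = [1:0:1]`. -/
def ptP3 : Fin 3 → ℂ := ![1, 0, 1]
/-- Coordinate representative of `p4 = [16+4α+4β : 3δ+6 : 12]`. -/
def ptP4 : Fin 3 → ℂ := ![16+4*α+4*β, 3*δ+6, 12]
/-- Coordinate representative of `p5 = [16+4α+4β : 3δ−6 : 12]`. -/
def ptP5 : Fin 3 → ℂ := ![16+4*α+4*β, 3*δ-6, 12]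


lemma hα2 : α^2 = 17 := by
  unfold α; norm_cast; exact Real.sq_sqrt (by norm_num)
lemma hβ2 : β^2 = 21 + 5*α := by
  unfold β α; norm_cast; exact Real.sq_sqrt (by positivity)
lemma hδ2 : δ^2 = 5 + α := by
  unfold δ α; norm_cast; exact Real.sq_sqrt (by positivity)

set_option maxHeartbeats 2000000 in
lemma evalF (P : Fin 3 → ℂ) : eval P F = (345801806208*α*β*δ*(P 0)^4*(P 1)^3*(P 2) + 1201824118152*α*β*δ*(P 0)^4*(P 1)*(P 2)^3 + 340372371456*α*β*δ*(P 0)^3*(P 1)^5 + 5278883270400*α*β*δ*(P 0)^3*(P 1)^3*(P 2)^2 + -8717053842648*α*β*δ*(P 0)^3*(P 1)*(P 2)^4 + -26240095982592*α*β*δ*(P 0)^2*(P 1)^3*(P 2)^3 + 19947208562904*α*β*δ*(P 0)^2*(P 1)*(P 2)^5 + 20615410905984*α*β*δ*(P 0)*(P 1)^3*(P 2)^4 + -18550552070472*α*β*δ*(P 0)*(P 1)*(P 2)^6 + 6118573232064*α*β*δ*(P 1)*(P 2)^7 + -72389196288*α*β*(P 0)^4*(P 1)^4 + -3335393797632*α*β*(P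 0)^4*(P 1)^2*(P 2)^2 + -1065820046526*α*β*(P 0)^4*(P 2)^4 + -8342111361024*α*β*(P 0)^3*(P 1)^4*(P 2) + 3945428471808*α*β*(P 0)^3*(P 1)^2*(P 2)^3 + 10184161263912*α*β*(P 0)^3*(P 2)^5 + 20168534212608*α*β*(P 0)^2*(P 1)^4*(P 2)^2 + 53110876008192*α*β*(P 0)^2*(P 1)^2*(P 2)^4 + -32270723397636*α*β*(P 0)^2*(P 2)^6 + -100932292129536*α*β*(P 0)*(P 1)^2*(P 2)^5 + 38252243189640*α*β*(P 0)*(P 2)^7 + 47211381447168*α*β*(P 1)^2*(P 2)^6 + -15099861009390*α*β*(P 2)^8 + 2230583000832*α*δ*(P 0)^4*(P 1)^3*(P 2) + 7752983280624*α*δ*(P 0)^4*(P 1)*(P 2)^3 + 2196196577280*α*δ*(P 0)^3*(P 1)^5 + 34054305467904*α*δ*(P 0)^3*(P 1)^3*(P 2)^2 + -56233813151952*α*δ*(P 0)^3*(P 1)*(P 2)^4 + -169275113478144*α*δ*(P 0)^2*(P 1)^3*(P 2)^3 + 128679652069200*α*δ*(P 0)^2*(P 1)*(P 2)^5 + 132990225009408*α*δ*(P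 0)*(P 1)^3*(P 2)^4 + -119669797805040*α*δ*(P 0)*(P 1)*(P 2)^6 + 39470975607168*α*δ*(P 1)*(P 2)^7 + -466877917440*α*(P 0)^4*(P 1)^4 + -21516582641184*α*(P 0)^4*(P 1)^2*(P 2)^2 + -6875617032333*α*(P 0)^4*(P 2)^4 + -53815549731840*α*(P 0)^3*(P 1)^4*(P 2) + 25451977456512*α*(P 0)^3*(P 1)^2*(P 2)^3 + 65698123816692*α*(P 0)^3*(P 2)^5 + 130107481479168*α*(P 0)^2*(P 1)^4*(P 2)^2 + 342618718898784*α*(P 0)^2*(P 1)^2*(P 2)^4 + -208178748305934*α*(P 0)^2*(P 2)^6 + -651115201689280*α*(P 0)*(P 1)^2*(P 2)^5 + 246765593291124*α*(P 0)*(P 2)^7 + 304561087975168*α*(P 1)^2*(P 2)^6 + -97409351769549*α*(P 2)^8 + 1425566051712*β*δ*(P 0)^4*(P 1)^3*(P 2) + 4955249010888*β*δ*(P 0)^4*(P 1)*(P 2)^3 + 1403912779776*β*δ*(P 0)^3*(P 1)^5 + 21765584054016*β*δ*(P 0)^3*(P 1)^3*(P 2)^2 + -35941340072088*β*δ*(P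 0)^3*(P 1)*(P 2)^4 + -108190674957312*β*δ*(P 0)^2*(P 1)^3*(P 2)^3 + 82244456443032*β*δ*(P 0)^2*(P 1)*(P 2)^5 + 84999524851584*β*δ*(P 0)*(P 1)^3*(P 2)^4 + -76485888713352*β*δ*(P 0)*(P 1)*(P 2)^6 + 25227523331520*β*δ*(P 1)*(P 2)^7 + -298344909312*β*(P 0)^4*(P 1)^4 + -13752106145280*β*(P 0)^4*(P 1)^2*(P 2)^2 + -4394491299054*β*(P 0)^4*(P 2)^4 + -34395989170176*β*(P 0)^3*(P 1)^4*(P 2) + 16267404201984*β*(P 0)^3*(P 1)^2*(P 2)^3 + 41990375439720*β*(P 0)^3*(P 2)^5 + 83157067186176*β*(P 0)^2*(P 1)^4*(P 2)^2 + 218981688444672*β*(P 0)^2*(P 1)^2*(P 2)^4 + -133055599121316*β*(P 0)^2*(P 2)^6 + -416154499902208*β*(P 0)*(P 1)^2*(P 2)^5 + 157718037119688*β*(P 0)*(P 2)^7 + 194657513400832*β*(P 1)^2*(P 2)^6 + -62258322139038*β*(P 2)^8 + 9197066426112*δ*(P 0)^4*(P 1)^3*(P 2) + 31966367214960*δ*(P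 0)^4*(P 1)*(P 2)^3 + 9054785949696*δ*(P 0)^3*(P 1)^5 + 140409366806016*δ*(P 0)^3*(P 1)^3*(P 2)^2 + -231857945521488*δ*(P 0)^3*(P 1)*(P 2)^4 + -697939172775936*δ*(P 0)^2*(P 1)^3*(P 2)^3 + 530559791222736*δ*(P 0)^2*(P 1)*(P 2)^5 + 548332739543808*δ*(P 0)*(P 1)^3*(P 2)^4 + -493411214740848*δ*(P 0)*(P 1)*(P 2)^6 + 162743001824640*δ*(P 1)*(P 2)^7 + -1925078503680*(P 0)^4*(P 1)^4 + -88715185482528*(P 0)^4*(P 1)^2*(P 2)^2 + -28348893570645*(P 0)^4*(P 2)^4 + -221886790124544*(P 0)^3*(P 1)^4*(P 2) + 104941198124928*(P 0)^3*(P 1)^2*(P 2)^3 + 270880301999124*(P 0)^3*(P 2)^5 + 536446841591808*(P 0)^2*(P 1)^4*(P 2)^2 + 1412653204386144*(P 0)^2*(P 1)^2*(P 2)^4 + -858342969385662*(P 0)^2*(P 2)^6 + -2684616751584448*(P 0)*(P 1)^2*(P 2)^5 + 1017440607056532*(P 0)*(P 2)^7 + 1255737534555904*(P 1)^2*(P 2)^6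 + -401629046099349*(P 2)^8) := by
  simp only [F, A1, A2, A3, A4, A5, A6, A7, A8, x, y, z, map_add, map_sub, map_mul,
    map_pow, map_neg, map_ofNat, eval_C, eval_X]
  try ring

set_option maxHeartbeats 1000000 in
lemma evalQ (P : Fin 3 → ℂ) : eval P Qpoly = (-48*α*β*δ*(P 0)*(P 1) + 48*α*β*δ*(P 1)*(P 2) + 9*α*β*(P 0)^2 + -66*α*β*(P 0)*(P 2) + 176*α*β*(P 1)^2 + 57*α*β*(P 2)^2 + -168*α*δ*(P 0)*(P 1) + 168*α*δ*(P 1)*(P 2) + 90*α*(P 0)^2 + -348*α*(P 0)*(P 2) + 1568*α*(P 1)^2 + 258*α*(P 2)^2 + -48*β*δ*(P 0)*(P 1) + 48*β*δ*(P 1)*(P 2) + 81*β*(P 0)^2 + -210*β*(P 0)*(P 2) + 1200*β*(P 1)^2 + 129*β*(P 2)^2 + -936*δ*(P 0)*(P 1) + 936*δ*(P 1)*(P 2) + 234*(P 0)^2 + -1404*(P 0)*(P 2) + 5920*(P 1)^2 + 1170*(P 2)^2) := by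
  simp only [Qpoly, x, y, z, map_add, map_sub, map_mul, map_pow, map_neg, map_ofNat,
    eval_C, eval_X]
  try ring

lemma hc2ne : ((176*α*β + 1568*α + 1200*β + 5920) : ℂ) ≠ 0 := by
  rw [show ((176*α*β + 1568*α + 1200*β + 5920) : ℂ)
    = ((176*(Real.sqrt 17*Real.sqrt (21+5*Real.sqrt 17))+1568*Real.sqrt 17+1200*Real.sqrt (21+5*Real.sqrt 17)+5920 : ℝ) : ℂ) by unfold α β; push_cast; ring]
  rw [Complex.ofReal_ne_zero]
  positivity

lemma hκne : (((-380643/512)*α*β + (-5048229/1024)*α + (-1572507/512)*β + (-20804397/1024)) : ℂ) ≠ 0 := by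
  rw [show (((-380643/512)*α*β + (-5048229/1024)*α + (-1572507/512)*β + (-20804397/1024)) : ℂ)
    = -(((380643/512)*(Real.sqrt 17*Real.sqrt (21+5*Real.sqrt 17))+(5048229/1024)*Real.sqrt 17+(1572507/512)*Real.sqrt (21+5*Real.sqrt 17)+(20804397/1024) : ℝ) : ℂ) by unfold α β; push_cast; ring]
  rw [neg_ne_zero, Complex.ofReal_ne_zero]
  positivity

lemma funext3 {f : Fin 3 → ℂ} {a b c : ℂ} (h0 : f 0 = a) (h1 : f 1 = b)
    (h2 : f 2 = c) : f = ![a,b,c] := by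
  funext i; fin_cases i <;> simpa


set_option maxHeartbeats 4000000

/-- the common zeros of `F` and `Q` in `ℙ²(ℂ)` are exactly
`{p2, p3, p4, p5}`. -/
theorem werner_octic_meets_conic_exactly :
    (eval ptP2 F = 0 ∧ eval ptP2 Qpoly = 0) ∧
    (eval ptP3 F = 0 ∧ eval ptP3 Qpoly = 0) ∧
    (eval ptP4 F = 0 ∧ eval ptP4 Qpoly = 0) ∧
    (eval ptP5 F = 0 ∧ eval ptP5 Qpoly = 0) ∧
    (∀ P : Fin 3 → ℂ, P ≠ 0 → eval P F = 0 → eval P Qpoly = 0 →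
      ∃ t : ℂ, t ≠ 0 ∧
        (P = t • ptP2 ∨ P = t • ptP3 ∨ P = t • ptP4 ∨ P = t • ptP5)) := by
  refine ⟨⟨?_, ?_⟩, ⟨?_, ?_⟩, ⟨?_, ?_⟩, ⟨?_, ?_⟩, ?_⟩
  · rw [evalF ptP2]
    simp only [ptP2, Matrix.cons_val_zero, Matrix.cons_val_one, Matrix.head_cons,
      Matrix.cons_val_two, Matrix.tail_cons]
    linear_combination (18133501253713920*α^5*β + 453183476354187264*α^5 + 1340675933723246592*α^4*β + 15635170475351212032*α^4 + 22382512554292936704*α^3*β + 154134175056568750080*α^3 + 113831395120127361024*α^2*β + 656240080251800899584*α^2 + 236882053252723212288*α*β + 1206590220665060732928*α + 190031543293989814272*β + 702517006311443361792) * hα2 + (67240533893971968*α^6 + 92920594159632384*α^5*β + 2273953165070303232*α^5 + 56653591652204544*α^4*β^2 + 1989327095791386624*α^4*β + 18185596639415967744*α^4 + 12840030132830208*α^3*β^3 + 797586087105331200*α^3*β^2 + 7581305592064253952*α^3*β + 11580533483196653568*α^3 + 104052192746618880*α^2*β^3 + 898066185538756608*α^2*β^2 + -24030421522004312064*α^2*β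 + -293161542337749307392*α^2 + -208318669254254592*α*β^3 + -13716892040853196800*α*β^2 + -155005276834945327104*α*β + -854857516717606404096*α + -1727813584786857984*β^3 + -32291169756739891200*β^2 + -163384497722111606784*β + -605608335372408238080) * hβ2 + (18133501253713920*α^6*β + 116980806884327424*α^6 + 67240533893971968*α^5*β^2 + 18133501253713920*α^5*β*δ^2 + 785405456656515072*α^5*β + 116980806884327424*α^5*δ^2 + 2268449403804647424*α^5 + 92920594159632384*α^4*β^3 + 67240533893971968*α^4*β^2*δ^2 + 1654482537339420672*α^4*β^2 + 5293471120883712*α^4*β*δ^4 + 772020654226735104*α^4*β*δ^2 + 6602861305144221696*α^4*β + 34155249169858560*α^4*δ^4 + 2182089909517221888*α^4*δ^2 + -1312026007512563712*α^4 + 56653591652204544*α^3*β^4 + 92920594159632384*α^3*β^3*δ^2 + 1460523974329073664*α^3*β^3 + 15880413362651136*α^3*β^2*δ^4 + 1627410683224719360*α^3*β^2*δ^2 + 6149982139520753664*α^3*β^2 + 164000432467279872*α^3*β*δ^4 + 7506609090156527616*α^3*β*δ^2 + -12606308953198534656*α^3*β + 396984399863611392*α^3*δ^4 + 5644664433348083712*α^3*δ^2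 + -43276346047948234752*α^3 + 12840030132830208*α^2*β^5 + 56653591652204544*α^2*β^4*δ^2 + 514318128844308480*α^2*β^4 + 15880413362651136*α^2*β^3*δ^4 + 1459617226563649536*α^2*β^3*δ^2 + 1610465194433617920*α^2*β^3 + 247368768976060416*α^2*β^2*δ^4 + 9631852995225747456*α^2*β^2*δ^2 + -25486546632301412352*α^2*β^2 + 1197793800966537216*α^2*β*δ^4 + 13751072710854451200*α^2*β*δ^2 + -118653263312675880960*α^2*β + 1696561155107389440*α^2*δ^4 + -18385635883301683200*α^2*δ^2 + -19713719414864719872*α^2 + 12840030132830208*α*β^5*δ^2 + 39852042082467840*α*β^5 + 5293471120883712*α*β^4*δ^4 + 540180985938444288*α*β^4*δ^2 + -259070411657945088*α*β^4 + 139357237229715456*α*β^3*δ^4 + 5571490941567369216*α*β^3*δ^2 + -19950136799137431552*α*β^3 + 1105381818825670656*α*β^2*δ^4 + 12694991889591263232*α*β^2*δ^2 + -109497779037779116032*α*β^2 + 3244802841126420480*α*β*δ^4 + -35555869568905224192*α*β*δ^2 + -1006328613611298816*α*β + 3174051351210393600*α*δ^4 + -54019734688378146816*α*δ^2 + 88323273510181650432*α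 + 52934595257106432*β^5*δ^2 + -53965367910383616*β^5 + 21833651551076352*β^4*δ^4 + 1264157126980927488*β^4*δ^2 + -5840583598785798144*β^4 + 304572417722744832*β^3*δ^4 + 4671294098348703744*β^3*δ^2 + -34116244595201286144*β^3 + 1465531199755223040*β^2*δ^4 + -16761298432134684672*β^2*δ^2 + 14846644912469041152*β^2 + 2981526388416921600*β*δ^4 + -55716221052155805696*β*δ^2 + 67899542236254756864*β + 2200312985776128000*δ^4 + -5755210847464919040*δ^2 + 173421471989116440576) * hδ2
  · rw [evalQ ptP2]
    simp only [ptP2, Matrix.cons_val_zero, Matrix.cons_val_one, Matrix.head_cons,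
      Matrix.cons_val_two, Matrix.tail_cons]
    linear_combination (-432*α*β + -2016*α + -432*β + -14112) * hα2 + (-288*α^2 + 144*α*β + -288*α + 1296*β + 2304) * hβ2 + (-576*α^2*β + -2016*α^2 + -576*α*β^2 + -1584*α*β + 864*α + -576*β^2 + -1008*β + 42048) * hδ2
  · rw [evalF ptP3]
    simp only [ptP3, Matrix.cons_val_zero, Matrix.cons_val_one, Matrix.head_cons,
      Matrix.cons_val_two, Matrix.tail_cons]
    linear_combination (0:ℂ) * hα2
  · rw [evalQ ptP3]
    simp only [ptP3, Matrix.cons_val_zero, Matrix.cons_val_one, Matrix.head_cons,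
      Matrix.cons_val_two, Matrix.tail_cons]
    linear_combination (0:ℂ) * hα2
  · rw [evalF ptP4]
    simp only [ptP4, Matrix.cons_val_zero, Matrix.cons_val_one, Matrix.head_cons,
      Matrix.cons_val_two, Matrix.tail_cons]
    linear_combination (32474593760772096*α^5*β + 832512064705855488*α^5 + 213019322299711488*α^4*β*δ + 4485003476534820864*α^4*β + 5369896796206399488*α^4*δ + 76594251848540553216*α^4 + 19254520088098504704*α^3*β*δ + 134727900404143620096*α^3*β + 251460138673918181376*α^3*δ + 924036908419763011584*α^3 + 320333827508022804480*α^2*β*δ + 683196133710823686144*α^2*β + 1524780385153631649792*α^2*δ + 3946443453116858105856*α^2 + 392570311874483847168*α*β*δ + 1146940281280816349184*α*β + 2988390368566201024512*α*δ + 5037100611261278257152*α + 173175256593555259392*β*δ + 351379811184140353536*β + -3046302715465560489984*δ + -2651666898504683814912) * hα2 + (124604903922204672*α^6 + 178967149201981440*α^5*β + 799142577990008832*α^5*δ + 11200515677990682624*α^5 + 114017961680437248*α^4*β^2 + 1119311800171757568*α^4*β*δ + 12644573943214374912*α^4*β + 35965213408951271424*α^4*δ + 127108759093214773248*α^4 +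 27181122639888384*α^3*β^3 + 693273155572334592*α^3*β^2*δ + 6439292247889870848*α^3*β^2 + 30726255022354464768*α^3*β*δ + 61036797000049754112*α^3*β + 165958085868768460800*α^3*δ + 86178052544831815680*α^3 + 160084611090874368*α^2*β^3*δ + 1180369602033352704*α^2*β^3 + 10116045858208481280*α^2*β^2*δ + 10224199702143369216*α^2*β^2 + 9198148576824262656*α^2*β*δ + -176314193391884304384*α^2*β + -674178598446052147200*α^2*δ + -2098402272691980926976*α^2 + 405284341414625280*α*β^3*δ + -1041707038501896192*α*β^3 + -13336009999124004864*α*β^2*δ + -121418804045219364864*α*β^2 + -517223128288436158464*α*β*δ + -1001264921784451989504*α*β + -3129570676025016975360*α*δ + -4617242043169272496128*α + -1050438347436589056*β^3*δ + -22456143409075716096*β^3 + -178365074428575350784*β^2*δ + -256037209800241840128*β^2 + -458726047646755848192*β*δ + -293768715364073865216*β + 748245590093317275648*δ + -1324409917209307250688) * hβ2 + (32474593760772096*α^6*β + 209487545094832128*α^6 + 124604903922204672*α^5*β^2 + 32474593760772096*α^5*β*δ^2 + 213019322299711488*α^5*β*δ + 3427794761721053184*α^5*β + 209487545094832128*α^5*δ^2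 + 1374183906256355328*α^5*δ + 16927532750746681344*α^5 + 178967149201981440*α^4*β^3 + 124604903922204672*α^4*β^2*δ^2 + 799142577990008832*α^4*β^2*δ + 10007401349977473024*α^4*β^2 + 5293471120883712*α^4*β*δ^4 + 52934711208837120*α^4*β*δ^3 + 2468919087836430336*α^4*β*δ^2 + 13647964253024157696*α^4*β*δ + 60163926288791371776*α^4*β + 34155249169858560*α^4*δ^4 + 341552491698585600*α^4*δ^3 + 10741952238837497856*α^4*δ^2 + 54787560566742319104*α^4*δ + 19700192103843299328*α^4 + 114017961680437248*α^3*β^4 + 178967149201981440*α^3*β^3*δ^2 + 1119311800171757568*α^3*β^3*δ + 11613832584005025792*α^3*β^3 + 15880413362651136*α^3*β^2*δ^4 + 158804133626511360*α^3*β^2*δ^3 + 6198366010043400192*α^3*β^2*δ^2 + 32723533850271547392*α^3*β^2*δ + 82913904454587383808*α^3*β^2 + 187821052511256576*α^3*β*δ^4 + 1878210525112565760*α^3*β*δ^3 + 38285656612075339776*α^3*β*δ^2 + 179424388094129602560*α^3*β*δ + 30063584684003033088*α^3*β + 550683021127974912*α^3*δ^4 + 5506830211279749120*α^3*δ^3 +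 37074409768756445184*α^3*δ^2 + 96141733782788505600*α^3*δ + -336167918772577763328*α^3 + 27181122639888384*α^2*β^5 + 114017961680437248*α^2*β^4*δ^2 + 693273155572334592*α^2*β^4*δ + 5869202439487684608*α^2*β^4 + 15880413362651136*α^2*β^3*δ^4 + 158804133626511360*α^2*β^3*δ^3 + 5939980607510544384*α^2*β^3*δ^2 + 30659871629739294720*α^2*β^3*δ + 57144468313417973760*α^2*β^3 + 295010009064013824*α^2*β^2*δ^4 + 2950100090640138240*α^2*β^2*δ^3 + 50865966109319233536*α^2*β^2*δ^2 + 224978878820193140736*α^2*β^2*δ + 19646515761495146496*α^2*β^2 + 1758276505760956416*α^2*β*δ^4 + 17582765057609564160*α^2*β*δ^3 + 85660887294050697216*α^2*β*δ^2 + 127627157115421065216*α^2*β*δ + -1020504214956835602432*α^2*β + 3329292333229277184*α^2*δ^4 + 33292923332292771840*α^2*δ^3 + -166999335222426992640*α^2*δ^2 + -1508870225546602610688*α^2*δ + -1920583765664709083136*α^2 + 27181122639888384*α*β^5*δ^2 + 160084611090874368*α*β^5*δ + 1044463988833910784*α*β^5 + 5293471120883712*α*β^4*δ^4 + 52934711208837120*α*β^4*δ^3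 + 2113101810762448896*α*β^4*δ^2 + 10870079189478801408*α*β^4*δ + 21311178050703458304*α*β^4 + 163177857273692160*α*β^3*δ^4 + 1631778572736921600*α*β^3*δ^3 + 30096857951564857344*α*β^3*δ^2 + 133375701762990931968*α*β^3*δ + 5706298669889617920*α*β^3 + 1610417334335569920*α*β^2*δ^4 + 16104173343355699200*α*β^2*δ^3 + 83904507719045480448*α*β^2*δ^2 + 135256948540785819648*α*β^2*δ + -875389061555102416896*α*β^2 + 6405930132493565952*α*β*δ^4 + 64059301324935659520*α*β*δ^3 + -283568803785593192448*α*β*δ^2 + -2687903839264794476544*α*β*δ + -2422840204102905888768*α*β + 8945297439175213056*α*δ^4 + 89452974391752130560*α*δ^3 + -597106097146703904768*α*δ^2 + -4199117692196727816192*α*δ + -2907100358575517859840*α + 112055670553706496*β^5*δ^2 + 659961063243251712*β^5*δ + 3844220653828177920*β^5 + 21833651551076352*β^4*δ^4 + 218336515510763520*β^4*δ^3 + 6774596215483465728*β^4*δ^2 + 33033650470185074688*β^4*δ + -3915606663182352384*β^4 + 402823849702588416*β^3*δ^4 + 4028238497025884160*β^3*δ^3 + 35656812345487785984*β^3*δ^2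 + 107159346725518835712*β^3*δ + -185604140690172149760*β^3 + 2737855647527731200*β^2*δ^4 + 27378556475277312000*β^2*δ^3 + -120324182485155840000*β^2*δ^2 + -1204230267871636488192*β^2*δ + -875307500588031934464*β^2 + 8156715191573151744*β*δ^4 + 81567151915731517440*β*δ^3 + -616692153037450641408*β*δ^2 + -4366248866948857724928*β*δ + -3996252996633425608704*β + 9012481989739020288*δ^4 + 90124819897390202880*δ^3 + 120902673207137402880*δ^2 + 880072616977669029888*δ + 10548592729846708174848) * hδ2
  · rw [evalQ ptP4]
    simp only [ptP4, Matrix.cons_val_zero, Matrix.cons_val_one, Matrix.head_cons,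
      Matrix.cons_val_two, Matrix.tail_cons]
    linear_combination (-432*α*β + -2016*α + -1152*β*δ + -1584*β + -9792*δ + -23904) * hα2 + (-288*α^2 + 144*α*β + -1152*α*δ + -1440*α + 1296*β + -1152*δ + 1152) * hβ2 + (-576*α^2*β + -2016*α^2 + -576*α*β^2 + -1584*α*β + 864*α + -576*β^2 + -1008*β + 42048) * hδ2
  · rw [evalF ptP5]
    simp only [ptP5, Matrix.cons_val_zero, Matrix.cons_val_one, Matrix.head_cons,
      Matrix.cons_val_two, Matrix.tail_cons]
    linear_combination (32474593760772096*α^5*β + 832512064705855488*α^5 + -213019322299711488*α^4*β*δ + 4485003476534820864*α^4*β + -5369896796206399488*α^4*δ + 76594251848540553216*α^4 + -19254520088098504704*α^3*β*δ + 134727900404143620096*α^3*β + -251460138673918181376*α^3*δ + 924036908419763011584*α^3 + -320333827508022804480*α^2*β*δ + 683196133710823686144*α^2*β + -1524780385153631649792*α^2*δ + 3946443453116858105856*α^2 + -392570311874483847168*α*β*δ + 1146940281280816349184*α*β + -2988390368566201024512*α*δ + 5037100611261278257152*α + -173175256593555259392*β*δ + 351379811184140353536*β + 3046302715465560489984*δ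 + -2651666898504683814912) * hα2 + (124604903922204672*α^6 + 178967149201981440*α^5*β + -799142577990008832*α^5*δ + 11200515677990682624*α^5 + 114017961680437248*α^4*β^2 + -1119311800171757568*α^4*β*δ + 12644573943214374912*α^4*β + -35965213408951271424*α^4*δ + 127108759093214773248*α^4 + 27181122639888384*α^3*β^3 + -693273155572334592*α^3*β^2*δ + 6439292247889870848*α^3*β^2 + -30726255022354464768*α^3*β*δ + 61036797000049754112*α^3*β + -165958085868768460800*α^3*δ + 86178052544831815680*α^3 + -160084611090874368*α^2*β^3*δ + 1180369602033352704*α^2*β^3 + -10116045858208481280*α^2*β^2*δ + 10224199702143369216*α^2*β^2 + -9198148576824262656*α^2*β*δ + -176314193391884304384*α^2*β + 674178598446052147200*α^2*δ + -2098402272691980926976*α^2 + -405284341414625280*α*β^3*δ + -1041707038501896192*α*β^3 + 13336009999124004864*α*β^2*δ + -121418804045219364864*α*β^2 + 517223128288436158464*α*β*δ + -1001264921784451989504*α*β + 3129570676025016975360*α*δ + -4617242043169272496128*α + 1050438347436589056*β^3*δ + -22456143409075716096*β^3 + 178365074428575350784*β^2*δ + -256037209800241840128*β^2 + 458726047646755848192*β*δ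 + -293768715364073865216*β + -748245590093317275648*δ + -1324409917209307250688) * hβ2 + (32474593760772096*α^6*β + 209487545094832128*α^6 + 124604903922204672*α^5*β^2 + 32474593760772096*α^5*β*δ^2 + -213019322299711488*α^5*β*δ + 3427794761721053184*α^5*β + 209487545094832128*α^5*δ^2 + -1374183906256355328*α^5*δ + 16927532750746681344*α^5 + 178967149201981440*α^4*β^3 + 124604903922204672*α^4*β^2*δ^2 + -799142577990008832*α^4*β^2*δ + 10007401349977473024*α^4*β^2 + 5293471120883712*α^4*β*δ^4 + -52934711208837120*α^4*β*δ^3 + 2468919087836430336*α^4*β*δ^2 + -13647964253024157696*α^4*β*δ + 60163926288791371776*α^4*β + 34155249169858560*α^4*δ^4 + -341552491698585600*α^4*δ^3 + 10741952238837497856*α^4*δ^2 + -54787560566742319104*α^4*δ + 19700192103843299328*α^4 + 114017961680437248*α^3*β^4 + 178967149201981440*α^3*β^3*δ^2 + -1119311800171757568*α^3*β^3*δ + 11613832584005025792*α^3*β^3 + 15880413362651136*α^3*β^2*δ^4 + -158804133626511360*α^3*β^2*δ^3 + 6198366010043400192*α^3*β^2*δ^2 + -32723533850271547392*α^3*β^2*δ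 + 82913904454587383808*α^3*β^2 + 187821052511256576*α^3*β*δ^4 + -1878210525112565760*α^3*β*δ^3 + 38285656612075339776*α^3*β*δ^2 + -179424388094129602560*α^3*β*δ + 30063584684003033088*α^3*β + 550683021127974912*α^3*δ^4 + -5506830211279749120*α^3*δ^3 + 37074409768756445184*α^3*δ^2 + -96141733782788505600*α^3*δ + -336167918772577763328*α^3 + 27181122639888384*α^2*β^5 + 114017961680437248*α^2*β^4*δ^2 + -693273155572334592*α^2*β^4*δ + 5869202439487684608*α^2*β^4 + 15880413362651136*α^2*β^3*δ^4 + -158804133626511360*α^2*β^3*δ^3 + 5939980607510544384*α^2*β^3*δ^2 + -30659871629739294720*α^2*β^3*δ + 57144468313417973760*α^2*β^3 + 295010009064013824*α^2*β^2*δ^4 + -2950100090640138240*α^2*β^2*δ^3 + 50865966109319233536*α^2*β^2*δ^2 + -224978878820193140736*α^2*β^2*δ + 19646515761495146496*α^2*β^2 + 1758276505760956416*α^2*β*δ^4 + -17582765057609564160*α^2*β*δ^3 + 85660887294050697216*α^2*β*δ^2 + -127627157115421065216*α^2*β*δ + -1020504214956835602432*α^2*β + 3329292333229277184*α^2*δ^4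 + -33292923332292771840*α^2*δ^3 + -166999335222426992640*α^2*δ^2 + 1508870225546602610688*α^2*δ + -1920583765664709083136*α^2 + 27181122639888384*α*β^5*δ^2 + -160084611090874368*α*β^5*δ + 1044463988833910784*α*β^5 + 5293471120883712*α*β^4*δ^4 + -52934711208837120*α*β^4*δ^3 + 2113101810762448896*α*β^4*δ^2 + -10870079189478801408*α*β^4*δ + 21311178050703458304*α*β^4 + 163177857273692160*α*β^3*δ^4 + -1631778572736921600*α*β^3*δ^3 + 30096857951564857344*α*β^3*δ^2 + -133375701762990931968*α*β^3*δ + 5706298669889617920*α*β^3 + 1610417334335569920*α*β^2*δ^4 + -16104173343355699200*α*β^2*δ^3 + 83904507719045480448*α*β^2*δ^2 + -135256948540785819648*α*β^2*δ + -875389061555102416896*α*β^2 + 6405930132493565952*α*β*δ^4 + -64059301324935659520*α*β*δ^3 + -283568803785593192448*α*β*δ^2 + 2687903839264794476544*α*β*δ + -2422840204102905888768*α*β + 8945297439175213056*α*δ^4 + -89452974391752130560*α*δ^3 + -597106097146703904768*α*δ^2 + 4199117692196727816192*α*δ + -2907100358575517859840*α + 112055670553706496*β^5*δ^2 + -659961063243251712*β^5*δ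 + 3844220653828177920*β^5 + 21833651551076352*β^4*δ^4 + -218336515510763520*β^4*δ^3 + 6774596215483465728*β^4*δ^2 + -33033650470185074688*β^4*δ + -3915606663182352384*β^4 + 402823849702588416*β^3*δ^4 + -4028238497025884160*β^3*δ^3 + 35656812345487785984*β^3*δ^2 + -107159346725518835712*β^3*δ + -185604140690172149760*β^3 + 2737855647527731200*β^2*δ^4 + -27378556475277312000*β^2*δ^3 + -120324182485155840000*β^2*δ^2 + 1204230267871636488192*β^2*δ + -875307500588031934464*β^2 + 8156715191573151744*β*δ^4 + -81567151915731517440*β*δ^3 + -616692153037450641408*β*δ^2 + 4366248866948857724928*β*δ + -3996252996633425608704*β + 9012481989739020288*δ^4 + -90124819897390202880*δ^3 + 120902673207137402880*δ^2 + -880072616977669029888*δ + 10548592729846708174848) * hδ2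
  · rw [evalQ ptP5]
    simp only [ptP5, Matrix.cons_val_zero, Matrix.cons_val_one, Matrix.head_cons,
      Matrix.cons_val_two, Matrix.tail_cons]
    linear_combination (-432*α*β + -2016*α + 1152*β*δ + -1584*β + 9792*δ + -23904) * hα2 + (-288*α^2 + 144*α*β + 1152*α*δ + -1440*α + 1296*β + 1152*δ + 1152) * hβ2 + (-576*α^2*β + -2016*α^2 + -576*α*β^2 + -1584*α*β + 864*α + -576*β^2 + -1008*β + 42048) * hδ2
  · intro P hP hFe hQe
    rw [evalF] at hFe
    rw [evalQ] at hQe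
    have key : (((-380643/512)*α*β + (-5048229/1024)*α + (-1572507/512)*β + (-20804397/1024))) * (6*(P 0) - (10+4*α+4*β)*(P 2))^2 * ((P 0) - (P 2))^2 * (12*(P 0) - (16+4*α+4*β)*(P 2))^4 = 0 := by
      linear_combination hFe - (948996*α*β*δ*(P 0)^5*(P 1) + -30170772*α*β*δ*(P 0)^4*(P 1)*(P 2) + 13784832*α*β*δ*(P 0)^3*(P 1)^3 + 361305864*α*β*δ*(P 0)^3*(P 1)*(P 2)^2 + -1163097792*α*β*δ*(P 0)^2*(P 1)*(P 2)^3 + 831013704*α*β*δ*(P 0)*(P 1)*(P 2)^4 + (1844127/4)*α*β*(P 0)^6 + (-28653669/2)*α*β*(P 0)^5*(P 2) + 13322124*α*β*(P 0)^4*(P 1)^2 + (787081077/4)*α*β*(P 0)^4*(P 2)^2 + -352582704*α*β*(P 0)^3*(P 1)^2*(P 2) + -1383366087*α*β*(P 0)^3*(P 2)^3 + 813026400*α*β*(P 0)^2*(P 1)^2*(P 2)^2 + (8697044211/2)*α*β*(P 0)^2*(P 2)^4 + -5051168497*α*β*(P 0)*(P 2)^5 + 1903108012*α*β*(P 2)^6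 + 6341166*α*δ*(P 0)^5*(P 1) + -194849766*α*δ*(P 0)^4*(P 1)*(P 2) + 88483392*α*δ*(P 0)^3*(P 1)^3 + 2330908308*α*δ*(P 0)^3*(P 1)*(P 2)^2 + -7503293808*α*δ*(P 0)^2*(P 1)*(P 2)^3 + 5360894100*α*δ*(P 0)*(P 1)*(P 2)^4 + (4691115/2)*α*(P 0)^6 + -90857295*α*(P 0)^5*(P 2) + 85727592*α*(P 0)^4*(P 1)^2 + (2535257853/2)*α*(P 0)^4*(P 2)^2 + -2273764896*α*(P 0)^3*(P 1)^2*(P 2) + -8923138758*α*(P 0)^3*(P 2)^3 + 5244566208*α*(P 0)^2*(P 1)^2*(P 2)^2 + 28052165955*α*(P 0)^2*(P 2)^4 + -32585105546*α*(P 0)*(P 2)^5 + 12276961160*α*(P 2)^6 + 3968676*β*δ*(P 0)^5*(P 1) + -124259508*β*δ*(P 0)^4*(P 1)*(P 2) + 56307456*β*δ*(P 0)^3*(P 1)^3 + 1489577544*β*δ*(P 0)^3*(P 1)*(P 2)^2 + -4795634880*β*δ*(P 0)^2*(P 1)*(P 2)^3 + 3426348168*β*δ*(P 0)*(P 1)*(P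 2)^4 + (7538103/4)*β*(P 0)^6 + (-118378989/2)*β*(P 0)^5*(P 2) + 54978156*β*(P 0)^4*(P 1)^2 + (3245213565/4)*β*(P 0)^4*(P 2)^2 + -1453303728*β*(P 0)^3*(P 1)^2*(P 2) + -5703664671*β*(P 0)^3*(P 2)^3 + 3352118112*β*(P 0)^2*(P 1)^2*(P 2)^2 + (35858918187/2)*β*(P 0)^2*(P 2)^4 + -20826507097*β*(P 0)*(P 2)^5 + 7846714252*β*(P 2)^6 + 26054622*δ*(P 0)^5*(P 1) + -803412054*δ*(P 0)^4*(P 1)*(P 2) + 365318208*δ*(P 0)^3*(P 1)^3 + 9610675380*δ*(P 0)^3*(P 1)*(P 2)^2 + -30936857328*δ*(P 0)^2*(P 1)*(P 2)^3 + 22103539380*δ*(P 0)*(P 1)*(P 2)^4 + (19444131/2)*(P 0)^6 + -374569191*(P 0)^5*(P 2) + 353406888*(P 0)^4*(P 1)^2 + (10453080645/2)*(P 0)^4*(P 2)^2 + -9375331104*(P 0)^3*(P 1)^2*(P 2) + -36791087670*(P 0)^3*(P 2)^3 + 21623961792*(P 0)^2*(P 1)^2*(P 2)^2 + 115662015483*(P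 0)^2*(P 2)^4 + -134351829402*(P 0)*(P 2)^5 + 50619208392*(P 2)^6) * hQe + (-3045144*α^5*β*(P 0)^2*(P 2)^6 + 6090288*α^5*β*(P 0)*(P 2)^7 + -3045144*α^5*β*(P 2)^8 + -111547236*α^5*(P 0)^2*(P 2)^6 + 223094472*α^5*(P 0)*(P 2)^7 + -111547236*α^5*(P 2)^8 + 45677160*α^4*β*(P 0)^3*(P 2)^5 + -517425696*α^4*β*(P 0)^2*(P 2)^6 + 897819912*α^4*β*(P 0)*(P 2)^7 + -426071376*α^4*β*(P 2)^8 + 1444822740*α^4*(P 0)^3*(P 2)^5 + -8793745428*α^4*(P 0)^2*(P 2)^6 + 13253022636*α^4*(P 0)*(P 2)^7 + -5904099948*α^4*(P 2)^8 + -280914534*α^3*β*(P 0)^4*(P 2)^4 + 5339071476*α^3*β*(P 0)^3*(P 2)^5 + -21587233536*α^3*β*(P 0)^2*(P 2)^6 + 28280910780*α^3*β*(P 0)*(P 2)^7 + -11751834186*α^3*β*(P 2)^8 + -7481087181*α^3*(P 0)^4*(P 2)^4 + 73332397044*α^3*(P 0)^3*(P 2)^5 + -236276762442*α^3*(P 0)^2*(P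 2)^6 + 282480682476*α^3*(P 0)*(P 2)^7 + -112055229897*α^3*(P 2)^8 + 904407768*α^2*β*(P 0)^5*(P 2)^3 + -22684829166*α^2*β*(P 0)^4*(P 2)^4 + 142904372004*α^2*β*(P 0)^3*(P 2)^5 + -367880378688*α^2*β*(P 0)^2*(P 2)^6 + 393264919188*α^2*β*(P 0)*(P 2)^7 + -146508491106*α^2*β*(P 2)^8 + -227759040*α^2*(P 0)^6*(P 1)^2 + 7468744320*α^2*(P 0)^5*(P 1)^2*(P 2) + 19563412572*α^2*(P 0)^5*(P 2)^3 + -3308359680*α^2*(P 0)^4*(P 1)^4 + -93954392640*α^2*(P 0)^4*(P 1)^2*(P 2)^2 + -260582316003*α^2*(P 0)^4*(P 2)^4 + 3308359680*α^2*(P 0)^3*(P 1)^4*(P 2) + 365856877440*α^2*(P 0)^3*(P 1)^2*(P 2)^3 + 1326209160672*α^2*(P 0)^3*(P 2)^5 + -478586759040*α^2*(P 0)^2*(P 1)^2*(P 2)^4 + -3084865738974*α^2*(P 0)^2*(P 2)^6 + 199443288960*α^2*(P 0)*(P 1)^2*(P 2)^5 + 3135616197084*α^2*(P 0)*(P 2)^7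 + -1135940715351*α^2*(P 2)^8 + -463807296*α*β*(P 0)^6*(P 1)^2 + -1603268316*α*β*(P 0)^6*(P 2)^2 + 14885285760*α*β*(P 0)^5*(P 1)^2*(P 2) + 47627114508*α*β*(P 0)^5*(P 2)^3 + -6563054592*α*β*(P 0)^4*(P 1)^4 + -187004462400*α*β*(P 0)^4*(P 1)^2*(P 2)^2 + -409594672404*α*β*(P 0)^4*(P 2)^4 + 6563054592*α*β*(P 0)^3*(P 1)^4*(P 2) + 728141515776*α*β*(P 0)^3*(P 1)^2*(P 2)^3 + 1646932155336*α*β*(P 0)^3*(P 2)^5 + -952491750912*α*β*(P 0)^2*(P 1)^2*(P 2)^4 + -3321749881908*α*β*(P 0)^2*(P 2)^6 + 396933219072*α*β*(P 0)*(P 1)^2*(P 2)^5 + 3112566024780*α*β*(P 0)*(P 2)^7 + -1074177471996*α*β*(P 2)^8 + -67942800*α*δ*(P 0)^7*(P 1) + 1878234480*α*δ*(P 0)^6*(P 1)*(P 2) + -1741875840*α*δ*(P 0)^5*(P 1)^3 + -24177722400*α*δ*(P 0)^5*(P 1)*(P 2)^2 + 56717884800*α*δ*(P 0)^4*(P 1)^3*(P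 2) + 199063719720*α*δ*(P 0)^4*(P 1)*(P 2)^3 + 12130652160*α*δ*(P 0)^3*(P 1)^5 + 42131652480*α*δ*(P 0)^3*(P 1)^3*(P 2)^2 + -851463106920*α*δ*(P 0)^3*(P 1)*(P 2)^4 + -828399720960*α*δ*(P 0)^2*(P 1)^3*(P 2)^3 + 1650208351560*α*δ*(P 0)^2*(P 1)*(P 2)^5 + 731292059520*α*δ*(P 0)*(P 1)^3*(P 2)^4 + -1432187456520*α*δ*(P 0)*(P 1)*(P 2)^6 + 456745922880*α*δ*(P 1)*(P 2)^7 + (82985715/4)*α*(P 0)^8 + -796848030*α*(P 0)^7*(P 2) + -3335736816*α*(P 0)^6*(P 1)^2 + -12950341884*α*(P 0)^6*(P 2)^2 + 107885895840*α*(P 0)^5*(P 1)^2*(P 2) + 324147928680*α*(P 0)^5*(P 2)^3 + -50400798912*α*(P 0)^4*(P 1)^4 + -1440089931240*α*(P 0)^4*(P 1)^2*(P 2)^2 + (-10384531317297/4)*α*(P 0)^4*(P 2)^4 + -248148511488*α*(P 0)^3*(P 1)^4*(P 2) + 5306190147936*α*(P 0)^3*(P 1)^2*(P 2)^3 + 10222938472617*α*(P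 0)^3*(P 2)^5 + 715463232000*α*(P 0)^2*(P 1)^4*(P 2)^2 + -4957632465432*α*(P 0)^2*(P 1)^2*(P 2)^4 + (-41497111182105/2)*α*(P 0)^2*(P 2)^6 + -687752960848*α*(P 0)*(P 1)^2*(P 2)^5 + 19675201454235*α*(P 0)*(P 2)^7 + 1674735050560*α*(P 1)^2*(P 2)^6 + -6863872991670*α*(P 2)^8 + -47559960*β*δ*(P 0)^7*(P 1) + 1740313512*β*δ*(P 0)^6*(P 1)*(P 2) + -1711984896*β*δ*(P 0)^5*(P 1)^3 + -23210148888*β*δ*(P 0)^5*(P 1)*(P 2)^2 + 82489295808*β*δ*(P 0)^4*(P 1)^3*(P 2) + 283946426316*β*δ*(P 0)^4*(P 1)*(P 2)^3 + 37187693568*β*δ*(P 0)^3*(P 1)^5 + 428665274496*β*δ*(P 0)^3*(P 1)^3*(P 2)^2 + -1488678452892*β*δ*(P 0)^3*(P 1)*(P 2)^4 + -2755989434880*β*δ*(P 0)^2*(P 1)^3*(P 2)^3 + 3118958296284*β*δ*(P 0)^2*(P 1)*(P 2)^5 + 2246546849472*β*δ*(P 0)*(P 1)^3*(P 2)^4 +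 -2801725156068*β*δ*(P 0)*(P 1)*(P 2)^6 + 909016281696*β*δ*(P 1)*(P 2)^7 + 62602875*β*(P 0)^8 + -942436620*β*(P 0)^7*(P 2) + -2322776736*β*(P 0)^6*(P 1)^2 + -9116050716*β*(P 0)^6*(P 2)^2 + 73622623680*β*(P 0)^5*(P 1)^2*(P 2) + 195911368632*β*(P 0)^5*(P 2)^3 + -40982858496*β*(P 0)^4*(P 1)^4 + -1260578862432*β*(P 0)^4*(P 1)^2*(P 2)^2 + -1442927360349*β*(P 0)^4*(P 2)^4 + -876072296448*β*(P 0)^3*(P 1)^4*(P 2) + 3952552420224*β*(P 0)^3*(P 1)^2*(P 2)^3 + 5721540017400*β*(P 0)^3*(P 2)^5 + 2197869047808*β*(P 0)^2*(P 1)^4*(P 2)^2 + 1090704626112*β*(P 0)^2*(P 1)^2*(P 2)^4 + -12187472222142*β*(P 0)^2*(P 2)^6 + -8998796557824*β*(P 0)*(P 1)^2*(P 2)^5 + 12063269527956*β*(P 0)*(P 2)^7 + 5144818526976*β*(P 1)^2*(P 2)^6 + -4340325447036*β*(P 2)^8 + -108708480*δ*(P 0)^7*(P 1) + 1893362688*δ*(P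 0)^6*(P 1)*(P 2) + -2900624256*δ*(P 0)^5*(P 1)^3 + -22340241936*δ*(P 0)^5*(P 1)*(P 2)^2 + 424669478400*δ*(P 0)^4*(P 1)^3*(P 2) + 1341553850928*δ*(P 0)^4*(P 1)*(P 2)^3 + 321950251008*δ*(P 0)^3*(P 1)^5 + 4662121094784*δ*(P 0)^3*(P 1)^3*(P 2)^2 + -9188467760880*δ*(P 0)^3*(P 1)*(P 2)^4 + -24562467159552*δ*(P 0)^2*(P 1)^3*(P 2)^3 + 20753640068496*δ*(P 0)^2*(P 1)*(P 2)^5 + 19478577210624*δ*(P 0)*(P 1)^3*(P 2)^4 + -19206990265152*δ*(P 0)*(P 1)*(P 2)^6 + 6320819694336*δ*(P 1)*(P 2)^7 + (2279026773/4)*(P 0)^8 + -4698587250*(P 0)^7*(P 2) + -8195410224*(P 0)^6*(P 1)^2 + -32813898174*(P 0)^6*(P 2)^2 + 269728519968*(P 0)^5*(P 1)^2*(P 2) + 853720150464*(P 0)^5*(P 2)^3 + -200542236480*(P 0)^4*(P 1)^4 + -6713288110584*(P 0)^4*(P 1)^2*(P 2)^2 + (-28611947992527/4)*(P 0)^4*(P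 2)^4 + -7750297343232*(P 0)^3*(P 1)^4*(P 2) + 17946228445344*(P 0)^3*(P 1)^2*(P 2)^3 + 31753816241967*(P 0)^3*(P 2)^5 + 19056447727104*(P 0)^2*(P 1)^4*(P 2)^2 + 31258743027288*(P 0)^2*(P 1)^2*(P 2)^4 + (-145014071842491/2)*(P 0)^2*(P 2)^6 + -87361135396784*(P 0)*(P 1)^2*(P 2)^5 + 74321185803045*(P 0)*(P 2)^7 + 44607918924992*(P 1)^2*(P 2)^6 + -27231756547368*(P 2)^8) * hα2 + (-18270864*α^6*(P 0)^2*(P 2)^6 + 36541728*α^6*(P 0)*(P 2)^7 + -18270864*α^6*(P 2)^8 + -45677160*α^5*β*(P 0)^2*(P 2)^6 + 91354320*α^5*β*(P 0)*(P 2)^7 + -45677160*α^5*β*(P 2)^8 + 228385800*α^5*(P 0)^3*(P 2)^5 + -1459400196*α^5*(P 0)^2*(P 2)^6 + 2233642992*α^5*(P 0)*(P 2)^7 + -1002628596*α^5*(P 2)^8 + -60902880*α^4*β^2*(P 0)^2*(P 2)^6 + 121805760*α^4*β^2*(P 0)*(P 2)^7 + -60902880*α^4*β^2*(P 2)^8 +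 456771600*α^4*β*(P 0)^3*(P 2)^5 + -2373968400*α^4*β*(P 0)^2*(P 2)^6 + 3377622000*α^4*β*(P 0)*(P 2)^7 + -1460425200*α^4*β*(P 2)^8 + -1123658136*α^4*(P 0)^4*(P 2)^4 + 11664475344*α^4*(P 0)^3*(P 2)^5 + -36693175896*α^4*(P 0)^2*(P 2)^6 + 42887558304*α^4*(P 0)*(P 2)^7 + -16735199616*α^4*(P 2)^8 + -45677160*α^3*β^3*(P 0)^2*(P 2)^6 + 91354320*α^3*β^3*(P 0)*(P 2)^7 + -45677160*α^3*β^3*(P 2)^8 + 456771600*α^3*β^2*(P 0)^3*(P 2)^5 + -2198872620*α^3*β^2*(P 0)^2*(P 2)^6 + 3027430440*α^3*β^2*(P 0)*(P 2)^7 + -1285329420*α^3*β^2*(P 2)^8 + -1685487204*α^3*β*(P 0)^4*(P 2)^4 + 14170138416*α^3*β*(P 0)^3*(P 2)^5 + -39343697304*α^3*β*(P 0)^2*(P 2)^6 + 42918928176*α^3*β*(P 0)*(P 2)^7 + -16059882084*α^3*β*(P 2)^8 + -45551808*α^3*(P 0)^6*(P 1)^2 + 1493748864*α^3*(P 0)^5*(P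 1)^2*(P 2) + 2713223304*α^3*(P 0)^5*(P 2)^3 + -661671936*α^3*(P 0)^4*(P 1)^4 + -18790878528*α^3*(P 0)^4*(P 1)^2*(P 2)^2 + -38374201278*α^3*(P 0)^4*(P 2)^4 + 661671936*α^3*(P 0)^3*(P 1)^4*(P 2) + 73171375488*α^3*(P 0)^3*(P 1)^2*(P 2)^3 + 185387588172*α^3*(P 0)^3*(P 2)^5 + -95717351808*α^3*(P 0)^2*(P 1)^2*(P 2)^4 + -396922293948*α^3*(P 0)^2*(P 2)^6 + 39888657792*α^3*(P 0)*(P 1)^2*(P 2)^5 + 377612511972*α^3*(P 0)*(P 2)^7 + -130416828222*α^3*(P 2)^8 + -18270864*α^2*β^4*(P 0)^2*(P 2)^6 + 36541728*α^2*β^4*(P 0)*(P 2)^7 + -18270864*α^2*β^4*(P 2)^8 + 228385800*α^2*β^3*(P 0)^3*(P 2)^5 + -1101595776*α^2*β^3*(P 0)^2*(P 2)^6 + 1518034152*α^2*β^3*(P 0)*(P 2)^7 + -644824176*α^2*β^3*(P 2)^8 + -1123658136*α^2*β^2*(P 0)^4*(P 2)^4 + 9038038644*α^2*β^2*(P 0)^3*(P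 2)^5 + -24117139140*α^2*β^2*(P 0)^2*(P 2)^6 + 25614794892*α^2*β^2*(P 0)*(P 2)^7 + -9412036260*α^2*β^2*(P 2)^8 + 2713223304*α^2*β*(P 0)^5*(P 2)^3 + -32755910598*α^2*β*(P 0)^4*(P 2)^4 + 141633282852*α^2*β*(P 0)^3*(P 2)^5 + -277613318664*α^2*β*(P 0)^2*(P 2)^6 + 247784314644*α^2*β*(P 0)*(P 2)^7 + -81761591538*α^2*β*(P 2)^8 + -13588560*α^2*δ*(P 0)^7*(P 1) + 375646896*α^2*δ*(P 0)^6*(P 1)*(P 2) + -348375168*α^2*δ*(P 0)^5*(P 1)^3 + -4835544480*α^2*δ*(P 0)^5*(P 1)*(P 2)^2 + 11343576960*α^2*δ*(P 0)^4*(P 1)^3*(P 2) + 39812743944*α^2*δ*(P 0)^4*(P 1)*(P 2)^3 + 2426130432*α^2*δ*(P 0)^3*(P 1)^5 + 8426330496*α^2*δ*(P 0)^3*(P 1)^3*(P 2)^2 + -170292621384*α^2*δ*(P 0)^3*(P 1)*(P 2)^4 + -165679944192*α^2*δ*(P 0)^2*(P 1)^3*(P 2)^3 + 330041670312*α^2*δ*(P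 0)^2*(P 1)*(P 2)^5 + 146258411904*α^2*δ*(P 0)*(P 1)^3*(P 2)^4 + -286437491304*α^2*δ*(P 0)*(P 1)*(P 2)^6 + 91349184576*α^2*δ*(P 1)*(P 2)^7 + (16597143/4)*α^2*(P 0)^8 + -159369606*α^2*(P 0)^7*(P 2) + -262766592*α^2*(P 0)^6*(P 1)^2 + -463754322*α^2*(P 0)^6*(P 2)^2 + 8543418624*α^2*(P 0)^5*(P 1)^2*(P 2) + 32134661172*α^2*(P 0)^5*(P 2)^3 + -4328095680*α^2*(P 0)^4*(P 1)^4 + -124230825144*α^2*(P 0)^4*(P 1)^2*(P 2)^2 + (-998560750689/4)*α^2*(P 0)^4*(P 2)^4 + -55381766400*α^2*(P 0)^3*(P 1)^4*(P 2) + 423489061440*α^2*(P 0)^3*(P 1)^2*(P 2)^3 + 852078799269*α^2*(P 0)^3*(P 2)^5 + 143092646400*α^2*(P 0)^2*(P 1)^4*(P 2)^2 + -157276901784*α^2*(P 0)^2*(P 1)^2*(P 2)^4 + (-3004050959373/2)*α^2*(P 0)^2*(P 2)^6 + -485208996656*α^2*(P 0)*(P 1)^2*(P 2)^5 + 1289566925283*α^2*(P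 0)*(P 2)^7 + 334947010112*α^2*(P 1)^2*(P 2)^6 + -421495743723*α^2*(P 2)^8 + -3045144*α*β^5*(P 0)^2*(P 2)^6 + 6090288*α*β^5*(P 0)*(P 2)^7 + -3045144*α*β^5*(P 2)^8 + 45677160*α*β^4*(P 0)^3*(P 2)^5 + -250975596*α*β^4*(P 0)^2*(P 2)^6 + 364919712*α*β^4*(P 0)*(P 2)^7 + -159621276*α*β^4*(P 2)^8 + -280914534*α*β^3*(P 0)^4*(P 2)^4 + 2598441876*α*β^3*(P 0)^3*(P 2)^5 + -7280228592*α*β^3*(P 0)^2*(P 2)^6 + 7888789692*α*β^3*(P 0)*(P 2)^7 + -2926088442*α*β^3*(P 2)^8 + 904407768*α*β^2*(P 0)^5*(P 2)^3 + -12150534141*α*β^2*(P 0)^4*(P 2)^4 + 53447359644*α*β^2*(P 0)^3*(P 2)^5 + -103284395442*α*β^2*(P 0)^2*(P 2)^6 + 90306809676*α*β^2*(P 0)*(P 2)^7 + -29223647505*α*β^2*(P 2)^8 + -1603268316*α*β*(P 0)^6*(P 2)^2 + 29538959148*α*β*(P 0)^5*(P 2)^3 + -189117612216*α*β*(P 0)^4*(P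 2)^4 + 569187532944*α*β*(P 0)^3*(P 2)^5 + -879734017644*α*β*(P 0)^2*(P 2)^6 + 670300699476*α*β*(P 0)*(P 2)^7 + -198572293392*α*β*(P 2)^8 + -382019328*α*δ*(P 0)^6*(P 1)*(P 2) + 182207232*α*δ*(P 0)^5*(P 1)^3 + 5641278048*α*δ*(P 0)^5*(P 1)*(P 2)^2 + 25275255552*α*δ*(P 0)^4*(P 1)^3*(P 2) + 66032206128*α*δ*(P 0)^4*(P 1)*(P 2)^3 + 26451910656*α*δ*(P 0)^3*(P 1)^5 + 414110967552*α*δ*(P 0)^3*(P 1)^3*(P 2)^2 + -619094515536*α*δ*(P 0)^3*(P 1)*(P 2)^4 + -2039822152704*α*δ*(P 0)^2*(P 1)^3*(P 2)^3 + 1487428865808*α*δ*(P 0)^2*(P 1)*(P 2)^5 + 1600253722368*α*δ*(P 0)*(P 1)^3*(P 2)^4 + -1407617283792*α*δ*(P 0)*(P 1)*(P 2)^6 + 467991468672*α*δ*(P 1)*(P 2)^7 + (108608607/2)*α*(P 0)^8 + -434434428*α*(P 0)^7*(P 2) + 1088072352*α*(P 0)^6*(P 1)^2 + -7122330486*α*(P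 0)^6*(P 2)^2 + -31276228032*α*(P 0)^5*(P 1)^2*(P 2) + 85056385068*α*(P 0)^5*(P 2)^3 + 6137797248*α*(P 0)^4*(P 1)^4 + 91011180528*α*(P 0)^4*(P 1)^2*(P 2)^2 + (-641517497937/2)*α*(P 0)^4*(P 2)^4 + -659355793920*α*(P 0)^3*(P 1)^4*(P 2) + -1008183051648*α*(P 0)^3*(P 1)^2*(P 2)^3 + 703426016358*α*(P 0)^3*(P 2)^5 + 1565604467712*α*(P 0)^2*(P 1)^4*(P 2)^2 + 5823244588176*α*(P 0)^2*(P 1)^2*(P 2)^4 + -1147143473499*α*(P 0)^2*(P 2)^6 + -8540635884128*α*(P 0)*(P 1)^2*(P 2)^5 + 1087102557942*α*(P 0)*(P 2)^7 + 3664751322752*α*(P 1)^2*(P 2)^6 + -400180276290*α*(P 2)^8 + -12580056*β^5*(P 0)^2*(P 2)^6 + 25160112*β^5*(P 0)*(P 2)^7 + -12580056*β^5*(P 2)^8 + 188700840*β^4*(P 0)^3*(P 2)^5 + -724800444*β^4*(P 0)^2*(P 2)^6 + 883498368*β^4*(P 0)*(P 2)^7 + -347398764*β^4*(P 2)^8 +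 -1160510166*β^3*(P 0)^4*(P 2)^4 + 6833808684*β^3*(P 0)^3*(P 2)^5 + -14490552600*β^3*(P 0)^2*(P 2)^6 + 13121719812*β^3*(P 0)*(P 2)^7 + -4304465730*β^3*(P 2)^8 + 3736276632*β^2*(P 0)^5*(P 2)^3 + -31000246317*β^2*(P 0)^4*(P 2)^4 + 98729264088*β^2*(P 0)^3*(P 2)^5 + -152381602026*β^2*(P 0)^2*(P 2)^6 + 113895013896*β^2*(P 0)*(P 2)^7 + -32978706273*β^2*(P 2)^8 + -6623399484*β*(P 0)^6*(P 2)^2 + 75664850436*β*(P 0)^5*(P 2)^3 + -341014324374*β*(P 0)^4*(P 2)^4 + 800273557836*β*(P 0)^3*(P 2)^5 + -1033881230388*β*(P 0)^2*(P 2)^6 + 692415229488*β*(P 0)*(P 2)^7 + -186834683514*β*(P 2)^8 + 231005520*δ*(P 0)^7*(P 1) + -7966889136*δ*(P 0)^6*(P 1)*(P 2) + 6684363648*δ*(P 0)^5*(P 1)^3 + 105478578432*δ*(P 0)^5*(P 1)*(P 2)^2 + -88538444928*δ*(P 0)^4*(P 1)^3*(P 2) + -404568719064*δ*(P 0)^4*(P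 1)*(P 2)^3 + 67568947200*δ*(P 0)^3*(P 1)^5 + 1564096466304*δ*(P 0)^3*(P 1)^3*(P 2)^2 + 342383088888*δ*(P 0)^3*(P 1)*(P 2)^4 + -5593860186624*δ*(P 0)^2*(P 1)^3*(P 2)^3 + 522116362344*δ*(P 0)^2*(P 1)*(P 2)^5 + 4111617801600*δ*(P 0)*(P 1)^3*(P 2)^4 + -934315711080*δ*(P 0)*(P 1)*(P 2)^6 + 376642284096*δ*(P 1)*(P 2)^7 + (610586343/4)*(P 0)^8 + 923807754*(P 0)^7*(P 2) + 5762179296*(P 0)^6*(P 1)^2 + -21469737204*(P 0)^6*(P 2)^2 + -169515643968*(P 0)^5*(P 1)^2*(P 2) + -5431279392*(P 0)^5*(P 2)^3 + 52459997760*(P 0)^4*(P 1)^4 + 1170050709096*(P 0)^4*(P 1)^2*(P 2)^2 + (2225310457383/4)*(P 0)^4*(P 2)^4 + -1730450684160*(P 0)^3*(P 1)^4*(P 2) + -6227367607872*(P 0)^3*(P 1)^2*(P 2)^3 + -1689592694715*(P 0)^3*(P 2)^5 + 4022541734400*(P 0)^2*(P 1)^4*(P 2)^2 + 19974498217128*(P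 0)^2*(P 1)^2*(P 2)^4 + (3876709909767/2)*(P 0)^2*(P 2)^6 + -24169484956080*(P 0)*(P 1)^2*(P 2)^5 + -884955289785*(P 0)*(P 2)^7 + 9416057102400*(P 1)^2*(P 2)^6 + 105689977527*(P 2)^8) * hβ2 + (-45551808*α^2*β^2*(P 0)^6*(P 1)^2 + 1493748864*α^2*β^2*(P 0)^5*(P 1)^2*(P 2) + -661671936*α^2*β^2*(P 0)^4*(P 1)^4 + -18790878528*α^2*β^2*(P 0)^4*(P 1)^2*(P 2)^2 + 661671936*α^2*β^2*(P 0)^3*(P 1)^4*(P 2) + 73171375488*α^2*β^2*(P 0)^3*(P 1)^2*(P 2)^3 + -95717351808*α^2*β^2*(P 0)^2*(P 1)^2*(P 2)^4 + 39888657792*α^2*β^2*(P 0)*(P 1)^2*(P 2)^5 + -463807296*α^2*β*(P 0)^6*(P 1)^2 + 14885285760*α^2*β*(P 0)^5*(P 1)^2*(P 2) + -6563054592*α^2*β*(P 0)^4*(P 1)^4 + -187004462400*α^2*β*(P 0)^4*(P 1)^2*(P 2)^2 + 6563054592*α^2*β*(P 0)^3*(P 1)^4*(P 2) + 728141515776*α^2*β*(P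 0)^3*(P 1)^2*(P 2)^3 + -952491750912*α^2*β*(P 0)^2*(P 1)^2*(P 2)^4 + 396933219072*α^2*β*(P 0)*(P 1)^2*(P 2)^5 + -1065315888*α^2*(P 0)^6*(P 1)^2 + 33800076576*α^2*(P 0)^5*(P 1)^2*(P 2) + -14865209856*α^2*(P 0)^4*(P 1)^4 + -424327356432*α^2*(P 0)^4*(P 1)^2*(P 2)^2 + 14865209856*α^2*(P 0)^3*(P 1)^4*(P 2) + 1652145955488*α^2*(P 0)^3*(P 1)^2*(P 2)^3 + -2161183568544*α^2*(P 0)^2*(P 1)^2*(P 2)^4 + 900630208800*α^2*(P 0)*(P 1)^2*(P 2)^5 + -236048256*α*β^2*(P 0)^6*(P 1)^2 + 7648701696*α*β^2*(P 0)^5*(P 1)^2*(P 2) + -3364429824*α*β^2*(P 0)^4*(P 1)^4 + -96255057024*α*β^2*(P 0)^4*(P 1)^2*(P 2)^2 + 3364429824*α*β^2*(P 0)^3*(P 1)^4*(P 2) + 374861571840*α*β^2*(P 0)^3*(P 1)^2*(P 2)^3 + -490372538112*α*β^2*(P 0)^2*(P 1)^2*(P 2)^4 + 204353369856*α*β^2*(P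 0)*(P 1)^2*(P 2)^5 + -3109995648*α*β*(P 0)^6*(P 1)^2 + 100142002944*α*β*(P 0)^5*(P 1)^2*(P 2) + -44144732160*α*β*(P 0)^4*(P 1)^4 + -1258659340416*α*β*(P 0)^4*(P 1)^2*(P 2)^2 + 44144732160*α*β*(P 0)^3*(P 1)^4*(P 2) + 4901080780800*α*β*(P 0)^3*(P 1)^2*(P 2)^3 + -6411201573888*α*β*(P 0)^2*(P 1)^2*(P 2)^4 + 2671748126208*α*β*(P 0)*(P 1)^2*(P 2)^5 + -10312507872*α*(P 0)^6*(P 1)^2 + 327665113920*α*(P 0)^5*(P 1)^2*(P 2) + -144193913856*α*(P 0)^4*(P 1)^4 + -4113676246176*α*(P 0)^4*(P 1)^2*(P 2)^2 + 144193913856*α*(P 0)^3*(P 1)^4*(P 2) + 16016798675520*α*(P 0)^3*(P 1)^2*(P 2)^3 + -20951666528832*α*(P 0)^2*(P 1)^2*(P 2)^4 + 8731191493440*α*(P 0)*(P 1)^2*(P 2)^5 + -190496448*β^2*(P 0)^6*(P 1)^2 + 6154952832*β^2*(P 0)^5*(P 1)^2*(P 2) + -2702757888*β^2*(P 0)^4*(P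 1)^4 + -77464178496*β^2*(P 0)^4*(P 1)^2*(P 2)^2 + 2702757888*β^2*(P 0)^3*(P 1)^4*(P 2) + 301690196352*β^2*(P 0)^3*(P 1)^2*(P 2)^3 + -394655186304*β^2*(P 0)^2*(P 1)^2*(P 2)^4 + 164464712064*β^2*(P 0)*(P 1)^2*(P 2)^5 + -4965302592*β*(P 0)^6*(P 1)^2 + 159835980672*β*(P 0)^5*(P 1)^2*(P 2) + -70239052800*β*(P 0)^4*(P 1)^4 + -2010427677504*β*(P 0)^4*(P 1)^2*(P 2)^2 + 70239052800*β*(P 0)^3*(P 1)^4*(P 2) + 7829240398848*β*(P 0)^3*(P 1)^2*(P 2)^3 + -10241715174912*β*(P 0)^2*(P 1)^2*(P 2)^4 + 4268031775488*β*(P 0)*(P 1)^2*(P 2)^5 + -24387126192*(P 0)^6*(P 1)^2 + 776380808736*(P 0)^5*(P 1)^2*(P 2) + -341937842688*(P 0)^4*(P 1)^4 + -9747585838224*(P 0)^4*(P 1)^2*(P 2)^2 + 341937842688*(P 0)^3*(P 1)^4*(P 2) + 37952490614688*(P 0)^3*(P 1)^2*(P 2)^3 + -49645811318688*(P 0)^2*(P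 1)^2*(P 2)^4 + 20688912859680*(P 0)*(P 1)^2*(P 2)^5) * hδ2
    have key2 : (6*(P 0) - (10+4*α+4*β)*(P 2)) = 0 ∨ ((P 0) - (P 2)) = 0 ∨ (12*(P 0) - (16+4*α+4*β)*(P 2)) = 0 := by
      by_contra hcon
      push_neg at hcon
      obtain ⟨h1, h2, h3⟩ := hcon
      exact (mul_ne_zero (mul_ne_zero (mul_ne_zero hκne (pow_ne_zero _ h1))
        (pow_ne_zero _ h2)) (pow_ne_zero _ h3)) key
    have hPne : ∀ i : Fin 3, P i ≠ 0 → P ≠ 0 := fun i h hc => h (by rw [hc]; rfl)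
    rcases key2 with h1 | h2 | h3
    · -- p2 : tangent line L2
      have hsq : ((176*α*β + 1568*α + 1200*β + 5920) : ℂ) * (2*(P 1) - δ*(P 2))^2 = 0 := by
        linear_combination 4 * hQe + (32*α*β*δ*(P 1) + -6*α*β*(P 0) + -42*α*β*(P 2) + 112*α*δ*(P 1) + -60*α*(P 0) + -236*α*(P 2) + 32*β*δ*(P 1) + -54*β*(P 0) + -122*β*(P 2) + 624*δ*(P 1) + -156*(P 0) + -1100*(P 2)) * h1 + (128*β*δ*(P 1)*(P 2) + -24*β*(P 0)*(P 2) + 8*β*(P 2)^2 + 1088*δ*(P 1)*(P 2) + -360*(P 0)*(P 2) + -216*(P 2)^2) * hα2 + (128*α*δ*(P 1)*(P 2) + -24*α*(P 0)*(P 2) + -168*α*(P 2)^2 + 128*δ*(P 1)*(P 2) + -216*(P 0)*(P 2) + -488*(P 2)^2) * hβ2 + (176*α*β*(P 2)^2 + 1568*α*(P 2)^2 + 1200*β*(P 2)^2 + 5920*(P 2)^2) * hδ2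
      have hv : 2*(P 1) - δ*(P 2) = 0 :=
        sq_eq_zero_iff.mp ((mul_eq_zero.mp hsq).resolve_left hc2ne)
      have hw0 : P 2 ≠ 0 := by
        intro h0
        apply hP
        funext i
        fin_cases i
        · show P 0 = 0
          have : (6:ℂ) * P 0 = 0 := by linear_combination h1 + (10+4*α+4*β) * h0
          simpa using this
        · show P 1 = 0
          have : (2:ℂ) * P 1 = 0 := by linear_combination hv + δ * h0
          simpa using this
        · exact h0
      refine ⟨(P 2)/6, div_ne_zero hw0 (by norm_num), Or.inl ?_⟩
      have hsm : ((P 2)/6) • ptP2 = ![(P 2)/6*(10+4*α+4*β), (P 2)/6*(3*δ), (P 2)/6*6] := by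
        funext i; fin_cases i <;> simp [ptP2]
      rw [hsm]
      refine funext3 ?_ ?_ ?_
      · field_simp
        linear_combination h1
      · field_simp
        linear_combination 3 * hv
      · field_simp
    · -- p3 : tangent line L3
      have hsq : ((176*α*β + 1568*α + 1200*β + 5920) : ℂ) * (P 1)^2 = 0 := by
        linear_combination hQe + (48*α*β*δ*(P 1) + -9*α*β*(P 0) + 57*α*β*(P 2) + 168*α*δ*(P 1) + -90*α*(P 0) + 258*α*(P 2) + 48*β*δ*(P 1) + -81*β*(P 0) + 129*β*(P 2) + 936*δ*(P 1) + -234*(P 0) + 1170*(P 2)) * h2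
      have hv : P 1 = 0 :=
        sq_eq_zero_iff.mp ((mul_eq_zero.mp hsq).resolve_left hc2ne)
      have hw0 : P 2 ≠ 0 := by
        intro h0
        apply hP
        funext i
        fin_cases i
        · show P 0 = 0
          linear_combination h2 + h0
        · exact hv
        · exact h0
      refine ⟨P 2, hw0, Or.inr (Or.inl ?_)⟩
      have hsm : (P 2) • ptP3 = ![(P 2)*1, (P 2)*0, (P 2)*1] := by
        funext i; fin_cases i <;> simp [ptP3]
      rw [hsm]
      refine funext3 ?_ ?_ ?_
      · linear_combination h2
      · simpa using hv
      · ring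
    · -- p4 / p5 : secant line L45
      have hsq : ((176*α*β + 1568*α + 1200*β + 5920) : ℂ) * ((4*(P 1) - (δ+2)*(P 2)) * (4*(P 1) - (δ-2)*(P 2))) = 0 := by
        linear_combination 16 * hQe + (64*α*β*δ*(P 1) + -12*α*β*(P 0) + -4*α*β*(P 2) + 224*α*δ*(P 1) + -120*α*(P 0) + -64*α*(P 2) + 64*β*δ*(P 1) + -108*β*(P 0) + -36*β*(P 2) + 1248*δ*(P 1) + -312*(P 0) + -320*(P 2)) * h3 + (256*β*δ*(P 1)*(P 2) + -48*β*(P 0)*(P 2) + 160*β*(P 2)^2 + 2176*δ*(P 1)*(P 2) + -720*(P 0)*(P 2) + 1232*(P 2)^2) * hα2 + (256*α*δ*(P 1)*(P 2) + -48*α*(P 0)*(P 2) + -16*α*(P 2)^2 + 256*δ*(P 1)*(P 2) + -432*(P 0)*(P 2) + -144*(P 2)^2) * hβ2 + (176*α*β*(P 2)^2 + 1568*α*(P 2)^2 + 1200*β*(P 2)^2 + 5920*(P 2)^2) * hδ2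
      have hv2 : (4*(P 1) - (δ+2)*(P 2)) = 0 ∨ (4*(P 1) - (δ-2)*(P 2)) = 0 :=
        mul_eq_zero.mp ((mul_eq_zero.mp hsq).resolve_left hc2ne)
      have hw0 : P 2 ≠ 0 := by
        intro h0
        apply hP
        funext i
        fin_cases i
        · show P 0 = 0
          have : (12:ℂ) * P 0 = 0 := by linear_combination h3 + (16+4*α+4*β) * h0
          simpa using this
        · show P 1 = 0
          rcases hv2 with hv | hv
          · have : (4:ℂ) * P 1 = 0 := by linear_combination hv + (δ+2) * h0
            simpa using this
          · have : (4:ℂ) * P 1 = 0 := by linear_combination hv + (δ-2) * h0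
            simpa using this
        · exact h0
      rcases hv2 with hv | hv
      · refine ⟨(P 2)/12, div_ne_zero hw0 (by norm_num), Or.inr (Or.inr (Or.inl ?_))⟩
        have hsm : ((P 2)/12) • ptP4 = ![(P 2)/12*(16+4*α+4*β), (P 2)/12*(3*δ+6), (P 2)/12*12] := by
          funext i; fin_cases i <;> simp [ptP4]
        rw [hsm]
        refine funext3 ?_ ?_ ?_
        · field_simp
          linear_combination h3
        · field_simp
          linear_combination 3 * hv
        · field_simp
      · refine ⟨(P 2)/12, div_ne_zero hw0 (by norm_num), Or.inr (Or.inr (Or.inr ?_))⟩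
        have hsm : ((P 2)/12) • ptP5 = ![(P 2)/12*(16+4*α+4*β), (P 2)/12*(3*δ-6), (P 2)/12*12] := by
          funext i; fin_cases i <;> simp [ptP5]
        rw [hsm]
        refine funext3 ?_ ?_ ?_
        · field_simp
          linear_combination h3
        · field_simp
          linear_combination 3 * hv
        · field_simp
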